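/- Let Γ be a group, f : Γ → ℂ an additive homomorphism, V > 0 real, and θ : Γ → ℝ a function with θ(γτ) = θ(γ) + θ(τ) + (V/(2π)) Im(f(γ) conj(f(τ))) for all γ, τ. Then for any elements γ₁, ..., γ_m ∈ Γ and integers k₁, ..., k_m, θ(γ₁^{k₁} ··· γ_m^{k_m}) = Σᵢ kᵢ θ(γᵢ) + (1/2) Σ_{1 ≤ i < j ≤ m} kᵢ kⱼ θ([γᵢ, γⱼ]), where [γᵢ, γⱼ] = γᵢγⱼγᵢ⁻¹γⱼ⁻¹. -/

import Mathlib

open Real Complex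

theorem theta_word_formula {Γ : Type*} [Group Γ] (f : Γ → ℂ)
    (hf : ∀ γ τ : Γ, f (γ * τ) = f γ + f τ) (V : ℝ) (hV : 0 < V) (θ : Γ → ℝ)
    (hθ : ∀ γ τ : Γ, θ (γ * τ) = θ γ + θ τ + (V / (2 * π)) * (f γ * (starRingEnd ℂ) (f τ)).im)
    (m : ℕ) (γ : Fin m → Γ) (k : Fin m → ℤ) :
    θ (List.ofFn fun i => γ i ^ k i).prod =
      ∑ i : Fin m, (k i : ℝ) * θ (γ i) +
      (1/2) * ∑ i : Fin m, ∑ j ∈ Finset.Ioi i,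
        (k i : ℝ) * (k j : ℝ) * θ (γ i * γ j * (γ i)⁻¹ * (γ j)⁻¹) := by
  set c : ℝ := V / (2 * π) with hc
  have hf1 : f 1 = 0 := by
    have h := hf 1 1; rw [one_mul] at h; exact (left_eq_add.mp h)
  have hfinv : ∀ a : Γ, f a⁻¹ = - f a := by
    intro a
    have h := hf a a⁻¹
    rw [mul_inv_cancel, hf1] at h
    linear_combination -h
  have hfpown : ∀ (a : Γ) (n : ℕ), f (a ^ n) = (n : ℂ) * f a := by
    intro a n
    induction n with
    | zero => simp [hf1]
    | succ n ih => rw [pow_succ, hf, ih]; push_cast; ring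
  have hfpow : ∀ (a : Γ) (n : ℤ), f (a ^ n) = (n : ℂ) * f a := by
    intro a n
    cases n with
    | ofNat n => simpa using hfpown a n
    | negSucc n =>
      rw [zpow_negSucc, hfinv, hfpown]; push_cast; ring
  have hθ1 : θ 1 = 0 := by
    have h := hθ 1 1
    rw [one_mul, hf1] at h
    simp at h
    linarith
  have hθinv : ∀ a : Γ, θ a⁻¹ = - θ a := by
    intro a
    have h := hθ a a⁻¹
    rw [mul_inv_cancel, hθ1, hfinv] at h
    simp [Complex.mul_im, Complex.conj_re, Complex.conj_im] at h
    ring_nf at h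
    linarith
  have hθpow : ∀ (a : Γ) (n : ℤ), θ (a ^ n) = (n : ℝ) * θ a := by
    have hnat : ∀ (a : Γ) (n : ℕ), θ (a ^ n) = (n : ℝ) * θ a := by
      intro a n
      induction n with
      | zero => simp [hθ1]
      | succ n ih =>
        have h := hθ (a ^ n) a
        rw [← pow_succ, ih, hfpown] at h
        rw [h]
        simp [Complex.mul_im, Complex.conj_re, Complex.conj_im]
        push_cast
        ring
    intro a n
    cases n with
    | ofNat n => simpa using hnat a n
    | negSucc n =>
      rw [zpow_negSucc, hθinv, hnat]; push_cast; ring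
  have hθcomm : ∀ a b : Γ, θ (a * b * a⁻¹ * b⁻¹) =
      2 * c * (f a * (starRingEnd ℂ) (f b)).im := by
    intro a b
    have h1 := hθ a b
    have h2 := hθ (a * b) a⁻¹
    have h3 := hθ (a * b * a⁻¹) b⁻¹
    simp only [hf, hfinv, hθinv] at h1 h2 h3
    rw [h2, h1] at h3
    rw [h3]
    simp only [Complex.mul_im, Complex.add_re, Complex.add_im, Complex.neg_re,
      Complex.neg_im, Complex.conj_re, Complex.conj_im]
    ring
  have hbil : ∀ (r s : ℤ) (x y : ℂ),
      c * (((r : ℂ) * x) * (starRingEnd ℂ) ((s : ℂ) * y)).im =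
      (r : ℝ) * (s : ℝ) * (c * (x * (starRingEnd ℂ) y).im) := by
    intro r s x y
    simp only [map_mul, Complex.mul_im, Complex.mul_re, Complex.conj_re, Complex.conj_im,
      Complex.intCast_re, Complex.intCast_im]
    push_cast
    ring
  have key : ∀ (n : ℕ) (g : Fin n → Γ) (l : Fin n → ℤ),
      f (List.ofFn fun i => g i ^ l i).prod = ∑ i, (l i : ℂ) * f (g i) ∧
      θ (List.ofFn fun i => g i ^ l i).prod = ∑ i, (l i : ℝ) * θ (g i) +
        ∑ i, ∑ j ∈ Finset.Ioi i,
          (l i : ℝ) * (l j : ℝ) * (c * (f (g i) * (starRingEnd ℂ) (f (g j))).im) := by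
    intro n
    induction n with
    | zero => intro g l; simp [hf1, hθ1]
    | succ n ih =>
      intro g l
      have hofn : (List.ofFn fun i => g i ^ l i) =
          (g 0 ^ l 0) :: List.ofFn (fun i : Fin n => g i.succ ^ l i.succ) := by
        simp [List.ofFn_succ]
      obtain ⟨ihf, ihθ⟩ := ih (fun i => g i.succ) (fun i => l i.succ)
      constructor
      · rw [hofn, List.prod_cons, hf, hfpow, ihf, Fin.sum_univ_succ]
      · rw [hofn, List.prod_cons, hθ, hfpow, ihf, hθpow, ihθ]
        rw [Fin.sum_univ_succ (f := fun i => (l i : ℝ) * θ (g i)),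
          Fin.sum_univ_succ (f := fun i => ∑ j ∈ Finset.Ioi i,
            (l i : ℝ) * (l j : ℝ) * (c * (f (g i) * (starRingEnd ℂ) (f (g j))).im)),
          Fin.sum_Ioi_zero]
        have hIm : c * (((l 0 : ℂ) * f (g 0)) *
            (starRingEnd ℂ) (∑ i : Fin n, ((l i.succ : ℂ)) * f (g i.succ))).im =
            ∑ j : Fin n, (l 0 : ℝ) * (l j.succ : ℝ) *
              (c * (f (g 0) * (starRingEnd ℂ) (f (g j.succ))).im) := by
          rw [map_sum, Finset.mul_sum, Complex.im_sum, Finset.mul_sum]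
          exact Finset.sum_congr rfl fun j _ => hbil (l 0) (l j.succ) _ _
        rw [hIm]
        rw [Finset.sum_congr rfl (fun i (_ : i ∈ Finset.univ) =>
          Fin.sum_Ioi_succ (a := i) (fun j => (l i.succ : ℝ) * (l j : ℝ) *
            (c * (f (g i.succ) * (starRingEnd ℂ) (f (g j))).im)))]
        ring
  obtain ⟨-, hkey⟩ := key m γ k
  rw [hkey]
  congr 1
  rw [Finset.mul_sum]
  refine Finset.sum_congr rfl fun i _ => ?_
  rw [Finset.mul_sum]
  refine Finset.sum_congr rfl fun j _ => ?_
  rw [hθcomm]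
  ring
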